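/- Let L : C ⇄ D : N be an adjunction, and suppose W_C and W_D are classes of morphisms in C and D such that N sends W_D into W_C and reflects them on objects in the image, and the unit η_X : X → N L X lies in W_C for every X in C. If N is fully faithful, then the induced functors on localizations C[W_C⁻¹] and D[W_D⁻¹] are equivalences, provided N(W_D) ⊆ W_C and L(W_C) ⊆ W_D. -/

import Mathlib

open CategoryTheory
universe v₁ v₂ u₁ u₂

/-- Let `L ⊣ N` be an adjunction, `W_C`, `W_D` classes of weak equivalences satisfying
two-out-of-three, with `L(W_C) ⊆ W_D`, `N(W_D) ⊆ W_C`, all unit maps in `W_C`, and `N`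
fully faithful.  Then the functors induced by `L` and `N` on the localizations
`C[W_C⁻¹]` and `D[W_D⁻¹]` are equivalences. -/
theorem localized_adjunction_equivalence
    {C : Type u₁} [Category.{v₁} C] {D : Type u₂} [Category.{v₂} D]
    (L : C ⥤ D) (N : D ⥤ C) (adj : L ⊣ N) [N.Full] [N.Faithful]
    (WC : MorphismProperty C) (WD : MorphismProperty D)
    [WC.HasTwoOutOfThreeProperty] [WD.HasTwoOutOfThreeProperty]
    (hL : ∀ ⦃X Y : C⦄ (f : X ⟶ Y), WC f → WD (L.map f))
    (hN : ∀ ⦃X Y : D⦄ (f : X ⟶ Y), WD f → WC (N.map f))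
    (hunit : ∀ X : C, WC (adj.unit.app X)) :
    ∃ (h₁ : WC.IsInvertedBy (L ⋙ WD.Q)) (h₂ : WD.IsInvertedBy (N ⋙ WC.Q)),
      (Localization.lift (L ⋙ WD.Q) h₁ WC.Q).IsEquivalence ∧
      (Localization.lift (N ⋙ WC.Q) h₂ WD.Q).IsEquivalence := by
  have h₁ : WC.IsInvertedBy (L ⋙ WD.Q) := fun X Y f hf =>
    Localization.inverts WD.Q WD _ (hL f hf)
  have h₂ : WD.IsInvertedBy (N ⋙ WC.Q) := fun X Y f hf =>
    Localization.inverts WC.Q WC _ (hN f hf)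
  set F := Localization.lift (L ⋙ WD.Q) h₁ WC.Q with hF
  set G := Localization.lift (N ⋙ WC.Q) h₂ WD.Q with hG
  -- unit iso on localizations
  haveI : ∀ X : C, IsIso ((Functor.whiskerRight adj.unit WC.Q).app X) := fun X =>
    Localization.inverts WC.Q WC _ (hunit X)
  haveI : IsIso (Functor.whiskerRight adj.unit WC.Q) := NatIso.isIso_of_isIso_app _
  have eunit : ((L ⋙ WD.Q) ⋙ G) ≅ WC.Q :=
    Functor.isoWhiskerLeft L (Localization.Lifting.iso WD.Q WD (N ⋙ WC.Q) G) ≪≫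
      (Functor.associator L N WC.Q).symm ≪≫
      (asIso (Functor.whiskerRight adj.unit WC.Q)).symm ≪≫ WC.Q.leftUnitor
  have eFG : F ⋙ G ≅ 𝟭 _ :=
    Localization.liftNatIso WC.Q WC ((L ⋙ WD.Q) ⋙ G) WC.Q (F ⋙ G) (𝟭 _)
      (eunit ≪≫ (WC.Q.rightUnitor).symm)
  -- counit iso on localizations
  have ecounit : ((N ⋙ WC.Q) ⋙ F) ≅ WD.Q :=
    Functor.isoWhiskerLeft N (Localization.Lifting.iso WC.Q WC (L ⋙ WD.Q) F) ≪≫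
      (Functor.associator N L WD.Q).symm ≪≫
      Functor.isoWhiskerRight (asIso adj.counit) WD.Q ≪≫ WD.Q.leftUnitor
  have eGF : G ⋙ F ≅ 𝟭 _ :=
    Localization.liftNatIso WD.Q WD ((N ⋙ WC.Q) ⋙ F) WD.Q (G ⋙ F) (𝟭 _)
      (ecounit ≪≫ (WD.Q.rightUnitor).symm)
  let e : WC.Localization ≌ WD.Localization := CategoryTheory.Equivalence.mk F G eFG.symm eGF
  exact ⟨h₁, h₂, e.isEquivalence_functor, e.isEquivalence_inverse⟩
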